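/- Let Φ be a reduced crystallographic root system with simple roots α_1, …, α_n, coroot lattice R^∨, coweight lattice Q^∨, and Weyl group W, and let w₀ ∈ W satisfy w₀² = I and w₀ρ̌ = −ρ̌. Let λ ∈ Q^∨ and η ∈ Q^∨ with ⟨α_i, η⟩ = 1 and η − λ ∈ R^∨, and suppose that proj_i(λ − 2ρ̌) = proj_i(η) =: ν. Set ζ := ρ̌ + w₀s_i(λ − ρ̌). Then ζ ∈ (w₀s_i(ν + ℝα_i^∨)) ∩ (η + R^∨). -/

import Mathlib

open scoped RealInnerProductSpace

namespace ADLV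

variable {V : Type*} [NormedAddCommGroup V] [InnerProductSpace ℝ V]

/-- The coroot `α^∨ = 2α/(α,α)` of a root `α`. -/
noncomputable def coroot (α : V) : V := (2 / ⟪α, α⟫) • α

/-- The reflection `s_α : x ↦ x - ⟨α, x⟩ α^∨` in the hyperplane orthogonal to `α`,
as a linear automorphism. -/
noncomputable def sRefl (α : V) (hα : α ≠ 0) : V ≃ₗ[ℝ] V :=
  Module.reflection (f := (innerSL ℝ α : V →ₗ[ℝ] ℝ)) (x := coroot α)
    (by
      have h : ⟪α, α⟫ ≠ 0 := inner_self_ne_zero.mpr hα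
      simp [coroot, real_inner_smul_right]
      field_simp)

/-- The orthogonal projection `proj_α : x ↦ x - ½⟨α, x⟩ α^∨` of `V` onto the
hyperplane `H_α = {x : ⟨α, x⟩ = 0}`. -/
noncomputable def projH (α : V) (x : V) : V := x - (⟪α, x⟫ / 2) • coroot α

/-- The (finite) Weyl group: the group generated by the simple reflections. -/
noncomputable def weylGroup {n : ℕ} (α : Fin n → V) (hα : ∀ j, α j ≠ 0) :
    Subgroup (V ≃ₗ[ℝ] V) :=
  Subgroup.closure (Set.range fun j => sRefl (α j) (hα j))

/-- The coroot lattice `R^∨ = ⊕_j ℤ α_j^∨`. -/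
noncomputable def corootLattice {n : ℕ} (α : Fin n → V) : AddSubgroup V :=
  AddSubgroup.closure (Set.range fun j => coroot (α j))

/-- The coweight lattice `Q^∨ = {x : ⟨α_j, x⟩ ∈ ℤ for all j}`. -/
def coweightLattice {n : ℕ} (α : Fin n → V) : Set V :=
  {x : V | ∀ j, ∃ m : ℤ, ⟪α j, x⟫ = (m : ℝ)}


lemma sRefl_apply (α : V) (hα : α ≠ 0) (x : V) :
    sRefl α hα x = x - ⟪α, x⟫ • coroot α := by
  simp [sRefl, Module.reflection_apply]

lemma sRefl_sq (α : V) (hα : α ≠ 0) : sRefl α hα * sRefl α hα = 1 := by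
  apply LinearEquiv.toLinearMap_injective
  ext x
  simpa [sRefl] using (Module.involutive_reflection (f := (innerSL ℝ α : V →ₗ[ℝ] ℝ))
    (x := coroot α) (by
      have h : ⟪α, α⟫ ≠ 0 := inner_self_ne_zero.mpr hα
      simp [coroot, real_inner_smul_right]
      field_simp)) x

lemma inner_coroot_self (α : V) (hα : α ≠ 0) : ⟪α, coroot α⟫ = 2 := by
  have h : ⟪α, α⟫ ≠ 0 := inner_self_ne_zero.mpr hα
  simp [coroot, real_inner_smul_right]
  field_simp

/-- The coweight lattice as an additive subgroup. -/
def coweightSub {n : ℕ} (α : Fin n → V) : AddSubgroup V where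
  carrier := coweightLattice α
  zero_mem' := fun j => ⟨0, by simp⟩
  add_mem' := by
    rintro a b ha hb j
    obtain ⟨m, hm⟩ := ha j; obtain ⟨m', hm'⟩ := hb j
    exact ⟨m + m', by rw [inner_add_right, hm, hm']; push_cast; ring⟩
  neg_mem' := by
    rintro a ha j
    obtain ⟨m, hm⟩ := ha j
    exact ⟨-m, by rw [inner_neg_right, hm]; push_cast; ring⟩

lemma corootLattice_le_coweightSub {n : ℕ} (α : Fin n → V)
    (hcart : ∀ k j, ∃ m : ℤ, ⟪α k, coroot (α j)⟫ = (m : ℝ)) :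
    corootLattice α ≤ coweightSub α := by
  rw [corootLattice, AddSubgroup.closure_le]
  rintro x ⟨j, rfl⟩ k
  exact hcart k j

lemma weyl_sub_mem {n : ℕ} (α : Fin n → V) (hα : ∀ j, α j ≠ 0)
    (hcart : ∀ k j, ∃ m : ℤ, ⟪α k, coroot (α j)⟫ = (m : ℝ))
    (w : V ≃ₗ[ℝ] V) (hw : w ∈ weylGroup α hα)
    (x : V) (hx : x ∈ coweightLattice α) :
    w x - x ∈ corootLattice α := by
  have hRQ := corootLattice_le_coweightSub α hcart
  have key : ∀ w : V ≃ₗ[ℝ] V, w ∈ weylGroup α hα →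
      ∀ x ∈ coweightLattice α, w x - x ∈ corootLattice α ∧ w⁻¹ x - x ∈ corootLattice α := by
    intro w hw
    refine Subgroup.closure_induction (k := Set.range fun j => sRefl (α j) (hα j))
      (p := fun g _ => ∀ x ∈ coweightLattice α,
        g x - x ∈ corootLattice α ∧ g⁻¹ x - x ∈ corootLattice α) ?_ ?_ ?_ ?_ hw
    · rintro g ⟨j, rfl⟩ x hx
      obtain ⟨m, hm⟩ := hx j
      have hmem : sRefl (α j) (hα j) x - x ∈ corootLattice α := by
        rw [sRefl_apply, hm]
        have : x - (m : ℝ) • coroot (α j) - x = (-m : ℤ) • coroot (α j) := by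
          rw [Int.cast_smul_eq_zsmul] at *; push_cast; module
        rw [this]
        have hgen : coroot (α j) ∈ corootLattice α :=
          AddSubgroup.subset_closure (Set.mem_range_self j)
        exact AddSubgroup.zsmul_mem _ hgen _
      have hinv : (sRefl (α j) (hα j))⁻¹ = sRefl (α j) (hα j) :=
        inv_eq_of_mul_eq_one_right (sRefl_sq _ _)
      exact ⟨hmem, by rw [hinv]; exact hmem⟩
    · intro x hx
      refine ⟨?_, ?_⟩ <;> simpa using AddSubgroup.zero_mem (corootLattice α)
    · intro u v hu hv hup hvp x hx
      have hvx : v x ∈ coweightLattice α := by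
        have := hRQ (hvp x hx).1
        have : v x = (v x - x) + x := by abel
        rw [this]
        exact (coweightSub α).add_mem (hRQ (hvp x hx).1) hx
      have huinvx : u⁻¹ x ∈ coweightLattice α := by
        have : u⁻¹ x = (u⁻¹ x - x) + x := by abel
        rw [this]
        exact (coweightSub α).add_mem (hRQ (hup x hx).2) hx
      constructor
      · have : (u * v) x - x = (u (v x) - v x) + (v x - x) := by
          show u (v x) - x = _; abel
        rw [this]
        exact AddSubgroup.add_mem _ (hup _ hvx).1 (hvp x hx).1
      · have : (u * v)⁻¹ x - x = (v⁻¹ (u⁻¹ x) - u⁻¹ x) + (u⁻¹ x - x) := by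
          rw [mul_inv_rev]
          show v⁻¹ (u⁻¹ x) - x = _; abel
        rw [this]
        exact AddSubgroup.add_mem _ (hvp _ huinvx).2 (hup x hx).2
    · intro u hu hup x hx
      refine ⟨(hup x hx).2, ?_⟩
      simpa using (hup x hx).1
  exact (key w hw x hx).1

/-- Let `Φ` be a reduced crystallographic root system with simple roots
`α_1, …, α_n`, coroot lattice `R^∨`, coweight lattice `Q^∨` and Weyl group `W`, and let
`w₀ ∈ W` satisfy `w₀² = I` and `w₀ ρ̌ = -ρ̌`.  Let `λ, η ∈ Q^∨` with `⟨α_i, η⟩ = 1` and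
`η - λ ∈ R^∨`, and suppose `proj_i (λ - 2ρ̌) = proj_i (η) =: ν`.  Set
`ζ := ρ̌ + w₀ s_i (λ - ρ̌)`.  Then `ζ ∈ (w₀ s_i (ν + ℝα_i^∨)) ∩ (η + R^∨)`. -/
theorem final_vertex_in_transverse_subspace {n : ℕ}
    (α : Fin n → V) (hα : ∀ j, α j ≠ 0)
    (hlin : LinearIndependent ℝ α)
    -- crystallographic: the Cartan integers `⟨α_k, α_j^∨⟩` are integers
    (hcart : ∀ k j, ∃ m : ℤ, ⟪α k, coroot (α j)⟫ = (m : ℝ))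
    -- `ρ̌` is the half-sum of the positive coroots, so `⟨α_j, ρ̌⟩ = 1` for all `j`
    (ρv : V) (hρ : ∀ j, ⟪α j, ρv⟫ = 1)
    (w₀ : V ≃ₗ[ℝ] V) (hw₀W : w₀ ∈ weylGroup α hα)
    (hw₀2 : w₀ * w₀ = 1) (hw₀ρ : w₀ ρv = -ρv)
    (i : Fin n) (lam η : V)
    (hlam : lam ∈ coweightLattice α) (hη : η ∈ coweightLattice α)
    (hηi : ⟪α i, η⟫ = 1) (hηlam : η - lam ∈ corootLattice α)
    (hproj : projH (α i) (lam - (2 : ℝ) • ρv) = projH (α i) η) :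
    (∃ r : ℝ, ρv + w₀ (sRefl (α i) (hα i) (lam - ρv))
        = w₀ (sRefl (α i) (hα i) (projH (α i) η + r • coroot (α i)))) ∧
    (ρv + w₀ (sRefl (α i) (hα i) (lam - ρv))) - η ∈ corootLattice α := by
  have hinv2 : ⟪α i, coroot (α i)⟫ = 2 := inner_coroot_self _ (hα i)
  have hsρ : sRefl (α i) (hα i) ρv = ρv - coroot (α i) := by
    rw [sRefl_apply, hρ i, one_smul]
  constructor
  · refine ⟨1 + ⟪α i, lam - (2:ℝ) • ρv⟫ / 2, ?_⟩
    have harg : projH (α i) η + (1 + ⟪α i, lam - (2:ℝ) • ρv⟫ / 2) • coroot (α i)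
        = lam - (2:ℝ) • ρv + coroot (α i) := by
      rw [← hproj, projH]
      module
    rw [harg]
    have hs : sRefl (α i) (hα i) (lam - (2:ℝ) • ρv + coroot (α i))
        = sRefl (α i) (hα i) (lam - ρv) - ρv := by
      have e : lam - (2:ℝ) • ρv + coroot (α i) = (lam - ρv) - (ρv - coroot (α i)) := by
        module
      rw [e, map_sub, ← hsρ]
      have : sRefl (α i) (hα i) (sRefl (α i) (hα i) ρv) = ρv := by
        have h2 := congrArg (fun w : V ≃ₗ[ℝ] V => w ρv) (sRefl_sq (α i) (hα i))
        simpa using h2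
      rw [this]
    rw [hs, map_sub w₀ (sRefl (α i) (hα i) (lam - ρv)) ρv, hw₀ρ]
    abel
  · set w : V ≃ₗ[ℝ] V := w₀ * sRefl (α i) (hα i) with hwdef
    have hwW : w ∈ weylGroup α hα :=
      (weylGroup α hα).mul_mem hw₀W (Subgroup.subset_closure ⟨i, rfl⟩)
    have hρQ : ρv ∈ coweightLattice α := fun j => ⟨1, by rw [hρ j]; norm_num⟩
    have hlamρ : lam - ρv ∈ coweightLattice α :=
      (coweightSub α).sub_mem hlam hρQ
    have hD : w (lam - ρv) - (lam - ρv) ∈ corootLattice α :=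
      weyl_sub_mem α hα hcart w hwW _ hlamρ
    have hwl : w (lam - ρv) = w₀ (sRefl (α i) (hα i) (lam - ρv)) := rfl
    have e : (ρv + w₀ (sRefl (α i) (hα i) (lam - ρv))) - η
        = (w (lam - ρv) - (lam - ρv)) + -(η - lam) := by
      rw [hwl]; abel
    rw [e]
    exact AddSubgroup.add_mem _ hD (AddSubgroup.neg_mem _ hηlam)


end ADLV
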